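/- Fix p ∈ [1,∞], D ∈ 𝒟̄^p and β > 0. The functional ρ : L^p → ℝ defined by ρ(X) = E[X] + D(X) + (e^{−β·D(X)} − 1)/β is a convex risk measure but is not a coherent risk measure. -/

import Mathlib

open MeasureTheory Filter Set
open scoped ENNReal

noncomputable section

variable {Ω : Type*} [MeasurableSpace Ω]

/-- The measure `μ` is nonatomic. -/
def Nonatomic (μ : Measure Ω) : Prop :=
  ∀ A : Set Ω, MeasurableSet A → 0 < μ A →
    ∃ B, B ⊆ A ∧ MeasurableSet B ∧ 0 < μ B ∧ μ B < μ A

/-- `X` is a.s. equal to a constant. -/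
def AEConst (μ : Measure Ω) (X : Ω → ℝ) : Prop :=
  ∃ c : ℝ, X =ᵐ[μ] fun _ => c

/-- `D` is a deviation measure on `L^p`: it is `[0,∞)`-valued and satisfies
(D1) translation invariance, (D2) strict positivity on nonconstant random variables,
(D3) positive homogeneity and (D4) subadditivity. -/
def IsDeviation (μ : Measure Ω) (p : ℝ≥0∞) (D : (Ω → ℝ) → ℝ) : Prop :=
  (∀ X, MemLp X p μ → 0 ≤ D X) ∧
  (∀ X, MemLp X p μ → ∀ c : ℝ, D (fun ω => X ω + c) = D X) ∧
  (∀ X, MemLp X p μ → ¬ AEConst μ X → 0 < D X) ∧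
  (∀ X, MemLp X p μ → ∀ l : ℝ, 0 ≤ l → D (fun ω => l * X ω) = l * D X) ∧
  (∀ X Y, MemLp X p μ → MemLp Y p μ → D (fun ω => X ω + Y ω) ≤ D X + D Y)

/-- (D5) law invariance. -/
def LawInvariant (μ : Measure Ω) (p : ℝ≥0∞) (D : (Ω → ℝ) → ℝ) : Prop :=
  ∀ X Y, MemLp X p μ → MemLp Y p μ → μ.map X = μ.map Y → D X = D Y

/-- `D` is range normalized: the supremum over nonconstant `X ∈ L^p` of
`D X / (ess-sup X - E[X])` equals `1` (the ratio being interpreted as `0` when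
`ess-sup X = ∞`, so that only essentially bounded `X` matter):
`1` is an upper bound of the ratios, and no `k < 1` is an upper bound. -/
def RangeNormalized (μ : Measure Ω) (p : ℝ≥0∞) (D : (Ω → ℝ) → ℝ) : Prop :=
  (∀ X, MemLp X p μ → (∃ c : ℝ, ∀ᵐ ω ∂μ, X ω ≤ c) →
    D X ≤ essSup X μ - ∫ ω, X ω ∂μ) ∧
  (∀ k : ℝ, k < 1 → ∃ X, MemLp X p μ ∧ (∃ c : ℝ, ∀ᵐ ω ∂μ, X ω ≤ c) ∧ ¬ AEConst μ X ∧
    k * (essSup X μ - ∫ ω, X ω ∂μ) < D X)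

/-- Monotonicity [M] for a real-valued functional on `L^p`. -/
def MonotoneRM (μ : Measure Ω) (p : ℝ≥0∞) (ρ : (Ω → ℝ) → ℝ) : Prop :=
  ∀ X Y, MemLp X p μ → MemLp Y p μ → (∀ᵐ ω ∂μ, X ω ≤ Y ω) → ρ X ≤ ρ Y

/-- Cash additivity [CA]. -/
def CashAdditive (μ : Measure Ω) (p : ℝ≥0∞) (ρ : (Ω → ℝ) → ℝ) : Prop :=
  ∀ X, MemLp X p μ → ∀ c : ℝ, ρ (fun ω => X ω + c) = ρ X + c

/-- Positive homogeneity [PH]. -/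
def PosHom (μ : Measure Ω) (p : ℝ≥0∞) (ρ : (Ω → ℝ) → ℝ) : Prop :=
  ∀ X, MemLp X p μ → ∀ l : ℝ, 0 < l → ρ (fun ω => l * X ω) = l * ρ X

/-- Subadditivity [SA]. -/
def SubadditiveRM (μ : Measure Ω) (p : ℝ≥0∞) (ρ : (Ω → ℝ) → ℝ) : Prop :=
  ∀ X Y, MemLp X p μ → MemLp Y p μ → ρ (fun ω => X ω + Y ω) ≤ ρ X + ρ Y

/-- Convexity [Cx]. -/
def ConvexRMProp (μ : Measure Ω) (p : ℝ≥0∞) (ρ : (Ω → ℝ) → ℝ) : Prop :=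
  ∀ X Y, MemLp X p μ → MemLp Y p μ → ∀ l : ℝ, 0 ≤ l → l ≤ 1 →
    ρ (fun ω => l * X ω + (1 - l) * Y ω) ≤ l * ρ X + (1 - l) * ρ Y

/-- SSD-consistency [SC]: `ρ X ≤ ρ Y` whenever `E[u(X)] ≤ E[u(Y)]` for every
increasing convex `u` (for which both expectations exist). -/
def SSDConsistent (μ : Measure Ω) (p : ℝ≥0∞) (ρ : (Ω → ℝ) → ℝ) : Prop :=
  ∀ X Y, MemLp X p μ → MemLp Y p μ →
    (∀ u : ℝ → ℝ, Monotone u → ConvexOn ℝ univ u →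
      Integrable (fun ω => u (X ω)) μ → Integrable (fun ω => u (Y ω)) μ →
      ∫ ω, u (X ω) ∂μ ≤ ∫ ω, u (Y ω) ∂μ) →
    ρ X ≤ ρ Y

/-- Monetary risk measure: [M] and [CA]. -/
def Monetary (μ : Measure Ω) (p : ℝ≥0∞) (ρ : (Ω → ℝ) → ℝ) : Prop :=
  MonotoneRM μ p ρ ∧ CashAdditive μ p ρ

/-- Coherent risk measure: [M], [CA], [PH], [SA]. -/
def Coherent (μ : Measure Ω) (p : ℝ≥0∞) (ρ : (Ω → ℝ) → ℝ) : Prop :=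
  MonotoneRM μ p ρ ∧ CashAdditive μ p ρ ∧ PosHom μ p ρ ∧ SubadditiveRM μ p ρ

/-- Convex risk measure: monetary and [Cx]. -/
def ConvexRiskMeasure (μ : Measure Ω) (p : ℝ≥0∞) (ρ : (Ω → ℝ) → ℝ) : Prop :=
  Monetary μ p ρ ∧ ConvexRMProp μ p ρ

/-- Consistent risk measure: monetary and [SC]. -/
def ConsistentRiskMeasure (μ : Measure Ω) (p : ℝ≥0∞) (ρ : (Ω → ℝ) → ℝ) : Prop :=
  Monetary μ p ρ ∧ SSDConsistent μ p ρ

/-- Star-shaped risk measure: monetary, normalized at `0` and star-shaped. -/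
def StarShapedRM (μ : Measure Ω) (p : ℝ≥0∞) (ρ : (Ω → ℝ) → ℝ) : Prop :=
  Monetary μ p ρ ∧ ρ (fun _ => 0) = 0 ∧
    ∀ X, MemLp X p μ → ∀ l : ℝ, 0 ≤ l → l ≤ 1 → ρ (fun ω => l * X ω) ≤ l * ρ X

/-- `g ∈ 𝒢`: a risk-weighting function, i.e. a nonconstant, increasing,
1-Lipschitz function on `[0,∞)` with `g 0 = 0`. -/
def IsRiskWeight (g : ℝ → ℝ) : Prop :=
  (∃ x y : ℝ, 0 ≤ x ∧ 0 ≤ y ∧ g x ≠ g y) ∧ MonotoneOn g (Ici 0) ∧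
  (∀ x y : ℝ, 0 ≤ x → 0 ≤ y → |g x - g y| ≤ |x - y|) ∧ g 0 = 0

/-- The monotonic mean-deviation measure `MD^D_g = g ∘ D + E`. -/
def MD (μ : Measure Ω) (D : (Ω → ℝ) → ℝ) (g : ℝ → ℝ) (X : Ω → ℝ) : ℝ :=
  g (D X) + ∫ ω, X ω ∂μ

/-- `V : ℝ × [0,∞) → (−∞,∞]` defining a mean-deviation model:
increasing in each argument, `V m 0 = m`, never `−∞`, and depending
nontrivially on the deviation argument. -/
def IsMDModelV (V : ℝ → ℝ → EReal) : Prop :=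
  (∀ d : ℝ, 0 ≤ d → Monotone (fun m => V m d)) ∧
  (∀ m : ℝ, MonotoneOn (fun d => V m d) (Ici 0)) ∧
  (∀ m : ℝ, V m 0 = (m : EReal)) ∧
  (∀ m d : ℝ, 0 ≤ d → V m d ≠ ⊥) ∧
  (∃ m d₁ d₂ : ℝ, 0 ≤ d₁ ∧ 0 ≤ d₂ ∧ V m d₁ ≠ V m d₂)

/-- Monotonicity [M] for an `(−∞,∞]`-valued functional. -/
def MonotoneE (μ : Measure Ω) (p : ℝ≥0∞) (U : (Ω → ℝ) → EReal) : Prop :=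
  ∀ X Y, MemLp X p μ → MemLp Y p μ → (∀ᵐ ω ∂μ, X ω ≤ Y ω) → U X ≤ U Y

/-- Cash additivity [CA] for an `(−∞,∞]`-valued functional. -/
def CashAdditiveE (μ : Measure Ω) (p : ℝ≥0∞) (U : (Ω → ℝ) → EReal) : Prop :=
  ∀ X, MemLp X p μ → ∀ c : ℝ, U (fun ω => X ω + c) = U X + (c : EReal)

/-- SSD-consistency [SC] for an `(−∞,∞]`-valued functional. -/
def SSDConsistentE (μ : Measure Ω) (p : ℝ≥0∞) (U : (Ω → ℝ) → EReal) : Prop :=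
  ∀ X Y, MemLp X p μ → MemLp Y p μ →
    (∀ u : ℝ → ℝ, Monotone u → ConvexOn ℝ univ u →
      Integrable (fun ω => u (X ω)) μ → Integrable (fun ω => u (Y ω)) μ →
      ∫ ω, u (X ω) ∂μ ≤ ∫ ω, u (Y ω) ∂μ) →
    U X ≤ U Y

/-- Left derivative of a real function. -/
def leftDeriv (f : ℝ → ℝ) (x : ℝ) : ℝ := derivWithin f (Iio x) x

/-- The conjugate function `g*(y) = sup_{x ≥ 0} (x y − g x)`, with values in `(−∞,∞]`. -/
def conjFun (g : ℝ → ℝ) (y : ℝ) : EReal :=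
  ⨆ x : Ici (0:ℝ), ((x.1 * y - g x.1 : ℝ) : EReal)

/-- Value-at-Risk: the left `α`-quantile of `X`. -/
def VaR (μ : Measure Ω) (X : Ω → ℝ) (α : ℝ) : ℝ :=
  sInf {x : ℝ | ENNReal.ofReal α ≤ μ {ω | X ω ≤ x}}

/-- The signed Choquet integral `D_h(X) = ∫₀¹ VaR_α(X) h'(1−α) dα`. -/
def Dh (μ : Measure Ω) (h : ℝ → ℝ) (X : Ω → ℝ) : ℝ :=
  ∫ α in (0:ℝ)..1, VaR μ X α * leftDeriv h (1 - α)

/-- `Φ^p` (described via the conjugate exponent `q`): concave functions `h` on `[0,1]`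
with `h 0 = h 1 = 0` and `‖h'‖_q < ∞`. -/
def PhiSet (q : ℝ≥0∞) : Set (ℝ → ℝ) :=
  {h | ConcaveOn ℝ (Icc 0 1) h ∧ h 0 = 0 ∧ h 1 = 0 ∧
    MemLp (leftDeriv h) q ((volume : Measure ℝ).restrict (Ioo 0 1))}

/-- The `L²[0,1]` norm of a function. -/
def Lnorm2 (f : ℝ → ℝ) : ℝ := Real.sqrt (∫ t in (0:ℝ)..1, (f t) ^ 2)

/-- Left quantile function of a distribution (probability measure) on `ℝ`. -/
def qtl (ν : Measure ℝ) (u : ℝ) : ℝ := sInf {x : ℝ | ENNReal.ofReal u ≤ ν (Iic x)}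

/-- Convex order `X ≤_cx Y`: `E[φ(X)] ≤ E[φ(Y)]` for every convex `φ` for which
both expectations exist. -/
def ConvexOrder (μ : Measure Ω) (X Y : Ω → ℝ) : Prop :=
  ∀ φ : ℝ → ℝ, ConvexOn ℝ univ φ → Integrable (fun ω => φ (X ω)) μ →
    Integrable (fun ω => φ (Y ω)) μ → ∫ ω, φ (X ω) ∂μ ≤ ∫ ω, φ (Y ω) ∂μ

/-- `R` is a total preorder on `L^p`. -/
def TotalPreorderOn (μ : Measure Ω) (p : ℝ≥0∞) (R : (Ω → ℝ) → (Ω → ℝ) → Prop) : Prop :=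
  (∀ X, MemLp X p μ → R X X) ∧
  (∀ X Y Z, MemLp X p μ → MemLp Y p μ → MemLp Z p μ → R X Y → R Y Z → R X Z) ∧
  (∀ X Y, MemLp X p μ → MemLp Y p μ → R X Y ∨ R Y X)

/-- Axiom A1 (monotonicity): `X ≤ Y` a.s. implies `X ≽ Y`. -/
def AxiomA1 (μ : Measure Ω) (p : ℝ≥0∞) (R : (Ω → ℝ) → (Ω → ℝ) → Prop) : Prop :=
  ∀ X Y, MemLp X p μ → MemLp Y p μ → (∀ᵐ ω ∂μ, X ω ≤ Y ω) → R X Y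

/-- Axiom B1: for constants `c₁ ≤ c₂` one has `c₁ ≽ c₂`. -/
def AxiomB1 (R : (Ω → ℝ) → (Ω → ℝ) → Prop) : Prop :=
  ∀ c₁ c₂ : ℝ, c₁ ≤ c₂ → R (fun _ => c₁) (fun _ => c₂)

/-- Axiom A2 (translation invariance). -/
def AxiomA2 (μ : Measure Ω) (p : ℝ≥0∞) (R : (Ω → ℝ) → (Ω → ℝ) → Prop) : Prop :=
  ∀ X Y, MemLp X p μ → MemLp Y p μ → ∀ c : ℝ,
    (R X Y ↔ R (fun ω => X ω + c) (fun ω => Y ω + c))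

/-- Axiom A3 (weak positive homogeneity). -/
def AxiomA3 (μ : Measure Ω) (p : ℝ≥0∞) (R : (Ω → ℝ) → (Ω → ℝ) → Prop) : Prop :=
  ∀ X Y, MemLp X p μ → MemLp Y p μ → (∫ ω, X ω ∂μ) = (∫ ω, Y ω ∂μ) → R X Y →
    ∀ l : ℝ, 0 < l → R (fun ω => l * X ω) (fun ω => l * Y ω)

/-- Axiom A4 (risk aversion). -/
def AxiomA4 (μ : Measure Ω) (p : ℝ≥0∞) (R : (Ω → ℝ) → (Ω → ℝ) → Prop) : Prop :=
  (∀ X Y, MemLp X p μ → MemLp Y p μ → ConvexOrder μ X Y → R X Y) ∧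
  (∀ X, MemLp X p μ → ¬ AEConst μ X →
    R (fun _ => ∫ ω, X ω ∂μ) X ∧ ¬ R X (fun _ => ∫ ω, X ω ∂μ))

/-- Axiom A5 (solvability). -/
def AxiomA5 (μ : Measure Ω) (p : ℝ≥0∞) (R : (Ω → ℝ) → (Ω → ℝ) → Prop) : Prop :=
  ∀ X, MemLp X p μ → ∃ c : ℝ, R X (fun _ => c) ∧ R (fun _ => c) X

/-- Axiom A6 (weak convexity). -/
def AxiomA6 (μ : Measure Ω) (p : ℝ≥0∞) (R : (Ω → ℝ) → (Ω → ℝ) → Prop) : Prop :=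
  ∀ X Y, MemLp X p μ → MemLp Y p μ → (∫ ω, X ω ∂μ) = (∫ ω, Y ω ∂μ) →
    R X Y → R Y X →
    ∀ l : ℝ, 0 ≤ l → l ≤ 1 → R (fun ω => l * X ω + (1 - l) * Y ω) X

/-- Axiom A7 (continuity): the upper and lower sets of every `X` are closed in the
`L^p` norm (expressed via sequential closedness, equivalent in the metric space `L^p`). -/
def AxiomA7 (μ : Measure Ω) (p : ℝ≥0∞) (R : (Ω → ℝ) → (Ω → ℝ) → Prop) : Prop :=
  ∀ X, MemLp X p μ →
    (∀ (Y : ℕ → Ω → ℝ) (Z : Ω → ℝ), (∀ n, MemLp (Y n) p μ) → MemLp Z p μ →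
      Tendsto (fun n => eLpNorm (fun ω => Y n ω - Z ω) p μ) atTop (nhds 0) →
      (∀ n, R (Y n) X) → R Z X) ∧
    (∀ (Y : ℕ → Ω → ℝ) (Z : Ω → ℝ), (∀ n, MemLp (Y n) p μ) → MemLp Z p μ →
      Tendsto (fun n => eLpNorm (fun ω => Y n ω - Z ω) p μ) atTop (nhds 0) →
      (∀ n, R X (Y n)) → R X Z)
/-- For `y ≤ x ≤ 0`, `e^x - e^y ≤ x - y`. -/
lemma exp_sub_exp_le {x y : ℝ} (hx : x ≤ 0) (hxy : y ≤ x) :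
    Real.exp x - Real.exp y ≤ x - y := by
  have h1 : Real.exp x ≤ 1 := Real.exp_le_one_iff.mpr hx
  have h2 : Real.exp y = Real.exp x * Real.exp (y - x) := by
    rw [← Real.exp_add]; ring_nf
  have h3 : (y - x) + 1 ≤ Real.exp (y - x) := Real.add_one_le_exp _
  have h4 : Real.exp (y - x) ≤ 1 := Real.exp_le_one_iff.mpr (by linarith)
  have h5 : (0:ℝ) < Real.exp x := Real.exp_pos x
  nlinarith

/-- The function `f(d) = d + (e^{-β d} - 1)/β` is nondecreasing on `[0, ∞)`. -/
lemma auxf_mono {β a b : ℝ} (hβ : 0 < β) (ha : 0 ≤ a) (hab : a ≤ b) :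
    a + (Real.exp (-β * a) - 1) / β ≤ b + (Real.exp (-β * b) - 1) / β := by
  have key : Real.exp (-β * a) - Real.exp (-β * b) ≤ (-β * a) - (-β * b) :=
    exp_sub_exp_le (by nlinarith) (by nlinarith)
  have h6 : (Real.exp (-β * a) - Real.exp (-β * b)) / β ≤ b - a := by
    rw [div_le_iff₀ hβ]; nlinarith
  have : (Real.exp (-β * a) - 1) / β - (Real.exp (-β * b) - 1) / β
      = (Real.exp (-β * a) - Real.exp (-β * b)) / β := by ring
  linarith
 
/-- One-sided Lipschitz-type bound for `f`. -/
lemma auxf_lip {β a b E : ℝ} (hβ : 0 < β) (ha : 0 ≤ a) (hb : 0 ≤ b) (hE : 0 ≤ E)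
    (h : a ≤ b + E) :
    a + (Real.exp (-β * a) - 1) / β ≤ b + (Real.exp (-β * b) - 1) / β + E := by
  rcases le_or_gt a b with hab | hab
  · have := auxf_mono hβ ha hab; linarith
  · have hexp : Real.exp (-β * a) ≤ Real.exp (-β * b) :=
      Real.exp_le_exp.mpr (by nlinarith)
    have : (Real.exp (-β * a) - 1) / β ≤ (Real.exp (-β * b) - 1) / β := by
      apply div_le_div_of_nonneg_right ?_ hβ.le |>.trans_eq rfl
      · linarith
    linarith

/-- Convexity of `f`. -/
lemma auxf_convex {β a b l : ℝ} (hβ : 0 < β) (hl : 0 ≤ l) (hl1 : l ≤ 1) :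
    (l * a + (1 - l) * b) + (Real.exp (-β * (l * a + (1 - l) * b)) - 1) / β
      ≤ l * (a + (Real.exp (-β * a) - 1) / β)
        + (1 - l) * (b + (Real.exp (-β * b) - 1) / β) := by
  have hc := convexOn_exp.2 (Set.mem_univ (-β * a)) (Set.mem_univ (-β * b))
    hl (by linarith : (0:ℝ) ≤ 1 - l) (by ring)
  simp only [smul_eq_mul] at hc
  have harg : l * (-β * a) + (1 - l) * (-β * b) = -β * (l * a + (1 - l) * b) := by ring
  rw [harg] at hc
  have : (Real.exp (-β * (l * a + (1 - l) * b)) - 1) / β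
      ≤ (l * Real.exp (-β * a) + (1 - l) * Real.exp (-β * b) - 1) / β := by
    apply div_le_div_of_nonneg_right ?_ hβ.le |>.trans_eq rfl
    · linarith
  have hr : l * (a + (Real.exp (-β * a) - 1) / β)
        + (1 - l) * (b + (Real.exp (-β * b) - 1) / β)
      = (l * a + (1 - l) * b)
        + (l * Real.exp (-β * a) + (1 - l) * Real.exp (-β * b) - 1) / β := by
    field_simp; ring
  linarith [hr ▸ le_refl (l * (a + (Real.exp (-β * a) - 1) / β)
        + (1 - l) * (b + (Real.exp (-β * b) - 1) / β)), this]

/-- If `W ≤ 0` a.e. then `essSup W μ ≤ 0` (for real-valued `W`). -/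
lemma essSup_nonpos_of_ae_nonpos {μ : Measure Ω} {W : Ω → ℝ}
    (h : ∀ᵐ ω ∂μ, W ω ≤ 0) : essSup W μ ≤ 0 := by
  rw [essSup_eq_sInf]
  have h0 : (0:ℝ) ∈ {a : ℝ | μ {x | a < W x} = 0} := by
    simp only [Set.mem_setOf_eq]
    rw [ae_iff] at h
    simpa [not_le] using h
  by_cases hbdd : BddBelow {a : ℝ | μ {x | a < W x} = 0}
  · exact csInf_le hbdd h0
  · rw [Real.sInf_of_not_bddBelow hbdd]

/-- Example (exm:1 (i)): `ρ(X) = E[X] + D(X) + (e^{−β D(X)} − 1)/β` is a convex risk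
measure but not a coherent risk measure. -/
theorem convex_not_coherent_example
    (μ : Measure Ω) [IsProbabilityMeasure μ] (hna : Nonatomic μ)
    (p : ℝ≥0∞) (hp : 1 ≤ p)
    (D : (Ω → ℝ) → ℝ) (hD : IsDeviation μ p D) (hDl : LawInvariant μ p D)
    (hDr : RangeNormalized μ p D)
    (β : ℝ) (hβ : 0 < β) :
    ConvexRiskMeasure μ p
        (fun X => (∫ ω, X ω ∂μ) + D X + (Real.exp (-β * D X) - 1) / β) ∧
      ¬ Coherent μ p
          (fun X => (∫ ω, X ω ∂μ) + D X + (Real.exp (-β * D X) - 1) / β) := by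
  obtain ⟨hD0, hDtr, hDpos, hDhom, hDsub⟩ := hD
  obtain ⟨hRn1, hRn2⟩ := hDr
  set ρ : (Ω → ℝ) → ℝ :=
    fun X => (∫ ω, X ω ∂μ) + D X + (Real.exp (-β * D X) - 1) / β with hρ
  -- Monotonicity
  have hMono : MonotoneRM μ p ρ := by
    intro X Y hX hY hXY
    set W : Ω → ℝ := fun ω => X ω - Y ω with hW
    have hWmem : MemLp W p μ := hX.sub hY
    have hW0 : ∀ᵐ ω ∂μ, W ω ≤ 0 := hXY.mono fun ω h => by simp [hW]; linarith
    have hDW : D W ≤ essSup W μ - ∫ ω, W ω ∂μ :=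
      hRn1 W hWmem ⟨0, hW0⟩
    have hess : essSup W μ ≤ 0 := essSup_nonpos_of_ae_nonpos hW0
    have hIW : ∫ ω, W ω ∂μ = (∫ ω, X ω ∂μ) - ∫ ω, Y ω ∂μ :=
      integral_sub (hX.integrable hp) (hY.integrable hp)
    have hE0 : (∫ ω, X ω ∂μ) ≤ ∫ ω, Y ω ∂μ :=
      integral_mono_ae (hX.integrable hp) (hY.integrable hp) hXY
    have hDW' : D W ≤ (∫ ω, Y ω ∂μ) - ∫ ω, X ω ∂μ := by
      rw [hIW] at hDW; linarith
    have hsplit : D X ≤ D Y + D W := by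
      have h1 := hDsub Y W hY hWmem
      have h2 : (fun ω => Y ω + W ω) = X := funext fun ω => by show Y ω + (X ω - Y ω) = X ω; ring
      rwa [h2] at h1
    have hkey := auxf_lip (a := D X) (b := D Y)
      (E := (∫ ω, Y ω ∂μ) - ∫ ω, X ω ∂μ) hβ (hD0 X hX) (hD0 Y hY)
      (by linarith) (by linarith)
    simp only [hρ]
    linarith
  -- Cash additivity
  have hCA : CashAdditive μ p ρ := by
    intro X hX c
    have hI : ∫ ω, (X ω + c) ∂μ = (∫ ω, X ω ∂μ) + c := by
      rw [integral_add (hX.integrable hp) (integrable_const c)]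
      simp
    simp only [hρ, hI, hDtr X hX c]
    ring
  -- Convexity
  have hCx : ConvexRMProp μ p ρ := by
    intro X Y hX hY l hl hl1
    have hlX : MemLp (fun ω => l * X ω) p μ := hX.const_mul l
    have hlY : MemLp (fun ω => (1 - l) * Y ω) p μ := hY.const_mul (1 - l)
    have hmem : MemLp (fun ω => l * X ω + (1 - l) * Y ω) p μ := hlX.add hlY
    have hI : ∫ ω, (l * X ω + (1 - l) * Y ω) ∂μ
        = l * (∫ ω, X ω ∂μ) + (1 - l) * ∫ ω, Y ω ∂μ := by
      rw [integral_add ((hX.integrable hp).const_mul l)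
        ((hY.integrable hp).const_mul (1 - l)), integral_const_mul, integral_const_mul]
    have hDle : D (fun ω => l * X ω + (1 - l) * Y ω) ≤ l * D X + (1 - l) * D Y := by
      have h1 := hDsub _ _ hlX hlY
      rw [hDhom X hX l hl, hDhom Y hY (1 - l) (by linarith)] at h1
      exact h1
    have hd0 : 0 ≤ D (fun ω => l * X ω + (1 - l) * Y ω) := hD0 _ hmem
    have hm0 : 0 ≤ l * D X + (1 - l) * D Y := by
      nlinarith [hD0 X hX, hD0 Y hY]
    have hmono := auxf_mono hβ hd0 hDle
    have hconv := auxf_convex (a := D X) (b := D Y) hβ hl hl1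
    simp only [hρ, hI]
    linarith
  refine ⟨⟨⟨hMono, hCA⟩, hCx⟩, ?_⟩
  -- Not coherent
  rintro ⟨-, -, hPH, -⟩
  obtain ⟨X, hX, -, -, hDX⟩ := hRn2 0 (by norm_num)
  simp only [zero_mul] at hDX
  have h12 := hPH X hX (1/2) (by norm_num)
  have hI : ∫ ω, (1/2 : ℝ) * X ω ∂μ = (1/2) * ∫ ω, X ω ∂μ := integral_const_mul _ _
  have hDhalf : D (fun ω => (1/2 : ℝ) * X ω) = (1/2) * D X :=
    hDhom X hX (1/2) (by norm_num)
  simp only [hρ, hI, hDhalf] at h12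
  set t : ℝ := Real.exp (-β * ((1/2) * D X)) with ht
  have hexp2 : Real.exp (-β * D X) = t * t := by
    rw [ht, ← Real.exp_add]; ring_nf
  have ht1 : t < 1 := Real.exp_lt_one_iff.mpr (by nlinarith)
  rw [hexp2] at h12
  have hβ' : β ≠ 0 := ne_of_gt hβ
  have heq : 2 * (t - 1) = t * t - 1 := by
    field_simp at h12
    nlinarith [h12]
  nlinarith [sq_nonneg (t - 1)]
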